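/- Every base matrix R (an m×m matrix over F((z^{-1})) whose j-th column is nonzero with index j) is invertible, and for all r ∈ F((z^{-1}))^m, Iv(R·r) = Iv(Δ·r), where Δ is the D-component of R, i.e. the diagonal matrix Diag(z^{-c_1},...,z^{-c_m}) with c_j the valuation of the j-th column of R. -/

import Mathlib

open Polynomial HahnSeries

noncomputable section

variable {F : Type*} [Field F] {m : ℕ}

/-- `z = X⁻¹` viewed in `F((z⁻¹)) = F((X))`. -/
def zed (F : Type*) [Field F] : LaurentSeries F := HahnSeries.single (-1 : ℤ) 1

/-- Embedding of `F[z]` into `F((z⁻¹))`. -/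
def Zpoly (p : Polynomial F) : LaurentSeries F := Polynomial.aeval (zed F) p

/-- Componentwise polynomial part `⌊·⌋` (terms with nonnegative powers of `z`). -/
def polyPart (f : LaurentSeries F) : LaurentSeries F where
  coeff n := if n ≤ 0 then f.coeff n else 0
  isPWO_support' := f.isPWO_support'.mono (fun n hn => by
    simp only [Function.mem_support, ne_eq] at hn ⊢
    by_cases h : n ≤ 0
    · simpa [h] using hn
    · simp [h] at hn)

/-- Fractional part `{·}` (strictly negative powers of `z`). -/
def fracPart (f : LaurentSeries F) : LaurentSeries F := f - polyPart f

/-- Valuation with values in `WithTop ℤ`. -/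
def vW (f : LaurentSeries F) : WithTop ℤ := open Classical in if f = 0 then ⊤ else (f.order : WithTop ℤ)

/-- Valuation of a vector: the minimum of component valuations. -/
def vV (r : Fin m → LaurentSeries F) : WithTop ℤ := Finset.univ.inf fun i => vW (r i)

/-- Indexed valuation of one component paired with its index. -/
def ivc (f : LaurentSeries F) (i : Fin m) : WithTop (Lex (ℤ × Fin m)) :=
  open Classical in if f = 0 then ⊤ else ↑(toLex (f.order, i))

/-- The indexed valuation `Iv` on `F((z⁻¹))^m`, with `Iv 0 = ⊤`. -/
def Iv (r : Fin m → LaurentSeries F) : WithTop (Lex (ℤ × Fin m)) :=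
  Finset.univ.inf fun i => ivc (r i) i


/-- `R` is a base matrix with column valuations `c`: each column `j` is nonzero,
has index `j`, and valuation `c j` (so its `D`-component is `Diag(z^{-c_1},…,z^{-c_m})`). -/
def IsBaseMatrix (R : Matrix (Fin m) (Fin m) (LaurentSeries F)) (c : Fin m → ℤ) : Prop :=
  ∀ j : Fin m, Iv (fun i => R i j) = ↑(toLex (c j, j))

/-- Multiplication by the `D`-matrix `Δ = Diag(z^{-c_1},…,z^{-c_m})`
(note `z^{-c} = X^c` in `F((X)) = F((z⁻¹))`). -/
def Dmul (c : Fin m → ℤ) (r : Fin m → LaurentSeries F) : Fin m → LaurentSeries F :=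
  fun j => HahnSeries.single (c j) 1 * r j

/-- `x > v(Δ)`: writing `x = (h,w)` one has `w > c h`; by convention `⊤ > v(Δ)`. -/
def gtVal (x : WithTop (Lex (ℤ × Fin m))) (c : Fin m → ℤ) : Prop :=
  ∀ (w : ℤ) (h : Fin m), x = ↑(toLex (w, h)) → c h < w

/-- `x ≤ v(Δ)`: writing `x = (h,w)` one has `w ≤ c h`. -/
def leVal (x : WithTop (Lex (ℤ × Fin m))) (c : Fin m → ℤ) : Prop :=
  ∃ (w : ℤ) (h : Fin m), x = ↑(toLex (w, h)) ∧ w ≤ c h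

namespace Stmt16Aux

lemma coeff_sum {α : Type*} (s : Finset α) (f : α → LaurentSeries F) (n : ℤ) :
    (∑ j ∈ s, f j).coeff n = ∑ j ∈ s, (f j).coeff n := by
  classical
  induction s using Finset.induction_on with
  | empty => simp
  | insert a s hj ih => rw [Finset.sum_insert hj, Finset.sum_insert hj, HahnSeries.coeff_add, ih]

lemma vanish_of (f : LaurentSeries F) (w : ℤ) (h : f = 0 ∨ w ≤ f.order) :
    ∀ n < w, f.coeff n = 0 := by
  intro n hn
  rcases h with h | h
  · simp [h]
  · exact HahnSeries.coeff_eq_zero_of_lt_order (hn.trans_le h)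

lemma of_vanish {f : LaurentSeries F} {w : ℤ} (h : ∀ n < w, f.coeff n = 0) :
    f = 0 ∨ w ≤ f.order := by
  by_cases hf : f = 0
  · exact Or.inl hf
  · refine Or.inr ?_
    by_contra hlt
    exact (HahnSeries.coeff_order_eq_zero.not.mpr hf) (h _ (lt_of_not_ge hlt))

lemma sum_order {α : Type*} (s : Finset α) (f : α → LaurentSeries F) (w : ℤ)
    (h : ∀ j ∈ s, f j = 0 ∨ w ≤ (f j).order) :
    (∑ j ∈ s, f j) = 0 ∨ w ≤ (∑ j ∈ s, f j).order := by
  apply of_vanish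
  intro n hn
  rw [coeff_sum]
  exact Finset.sum_eq_zero fun j hj => vanish_of _ _ (h j hj) n hn

lemma sum_order_eq {α : Type*} [DecidableEq α] {s : Finset α} {f : α → LaurentSeries F} {w : ℤ}
    {h0 : α} (hmem : h0 ∈ s) (hne : f h0 ≠ 0) (hord : (f h0).order = w)
    (h : ∀ j ∈ s, j ≠ h0 → f j = 0 ∨ w < (f j).order) :
    (∑ j ∈ s, f j) ≠ 0 ∧ (∑ j ∈ s, f j).order = w := by
  have hcoeff : (∑ j ∈ s, f j).coeff w = (f h0).coeff w := by
    rw [coeff_sum]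
    apply Finset.sum_eq_single_of_mem h0 hmem
    intro j hj hjne
    rcases h j hj hjne with h' | h'
    · simp [h']
    · exact HahnSeries.coeff_eq_zero_of_lt_order h'
  have hc0 : (f h0).coeff w ≠ 0 := by
    rw [← hord]; exact HahnSeries.coeff_order_eq_zero.not.mpr hne
  have hsne : (∑ j ∈ s, f j) ≠ 0 := fun h' => hc0 (by rw [← hcoeff, h']; simp)
  refine ⟨hsne, le_antisymm (HahnSeries.order_le_of_coeff_ne_zero (hcoeff ▸ hc0)) ?_⟩
  rcases sum_order s f w (fun j hj => by
      by_cases hjh : j = h0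
      · subst hjh; exact Or.inr hord.ge
      · rcases h j hj hjh with h' | h'
        · exact Or.inl h'
        · exact Or.inr h'.le) with h' | h'
  · exact absurd h' hsne
  · exact h'

lemma of_le_ivc {f : LaurentSeries F} {i : Fin m} {w : ℤ} {h : Fin m}
    (hle : (↑(toLex (w, h)) : WithTop (Lex (ℤ × Fin m))) ≤ ivc f i) :
    f = 0 ∨ (w ≤ f.order ∧ (f.order = w → h ≤ i)) := by
  by_cases hf : f = 0
  · exact Or.inl hf
  · right
    rw [ivc, if_neg hf, WithTop.coe_le_coe] at hle
    rcases Prod.Lex.le_iff.mp hle with h1 | ⟨h1, h2⟩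
    · exact ⟨h1.le, fun he => absurd (he ▸ h1) (lt_irrefl _)⟩
    · exact ⟨h1.le, fun _ => h2⟩

lemma le_ivc_of {f : LaurentSeries F} {i : Fin m} {w : ℤ} {h : Fin m}
    (hc : f = 0 ∨ w < f.order ∨ (w ≤ f.order ∧ h ≤ i)) :
    (↑(toLex (w, h)) : WithTop (Lex (ℤ × Fin m))) ≤ ivc f i := by
  by_cases hf : f = 0
  · simp [ivc, hf]
  · rw [ivc, if_neg hf, WithTop.coe_le_coe]
    apply Prod.Lex.le_iff.mpr
    rcases hc with hf' | h1 | ⟨h1, h2⟩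
    · exact absurd hf' hf
    · exact Or.inl h1
    · rcases lt_or_eq_of_le h1 with h1 | h1
      · exact Or.inl h1
      · exact Or.inr ⟨h1, h2⟩

lemma ivc_eq {f : LaurentSeries F} {i : Fin m} {w : ℤ} (hf : f ≠ 0) (ho : f.order = w) :
    ivc f i = ↑(toLex (w, i)) := by rw [ivc, if_neg hf, ho]

lemma Iv_le (r : Fin m → LaurentSeries F) (i : Fin m) : Iv r ≤ ivc (r i) i :=
  Finset.inf_le (Finset.mem_univ i)

lemma Iv_eq {r : Fin m → LaurentSeries F} {x : WithTop (Lex (ℤ × Fin m))} (h : Fin m)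
    (hx : ivc (r h) h = x) (hle : ∀ i, x ≤ ivc (r i) i) : Iv r = x :=
  le_antisymm (hx ▸ Iv_le r h) (Finset.le_inf fun i _ => hle i)

lemma Iv_eq_top_iff {r : Fin m → LaurentSeries F} : Iv r = ⊤ ↔ ∀ i, r i = 0 := by
  rw [Iv, Finset.inf_eq_top_iff]
  constructor
  · intro h i
    have hi := h i (Finset.mem_univ i)
    by_contra hf
    rw [ivc, if_neg hf] at hi
    exact WithTop.coe_ne_top hi
  · intro h i _
    simp [ivc, h i]


lemma base_diag {R : Matrix (Fin m) (Fin m) (LaurentSeries F)} {c : Fin m → ℤ}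
    (hR : IsBaseMatrix R c) (j : Fin m) : R j j ≠ 0 ∧ (R j j).order = c j := by
  have h := hR j
  rw [Iv] at h
  obtain ⟨i0, -, hi0⟩ := Finset.exists_mem_eq_inf (Finset.univ : Finset (Fin m))
      ⟨j, Finset.mem_univ j⟩ (fun i => ivc (R i j) i)
  rw [hi0] at h
  have hne0 : R i0 j ≠ 0 := by
    intro hz
    rw [ivc, if_pos hz] at h
    exact WithTop.coe_ne_top h.symm
  rw [ivc, if_neg hne0, WithTop.coe_inj] at h
  have h' : ((R i0 j).order, i0) = (c j, j) := toLex.injective h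
  have h1 : (R i0 j).order = c j := congrArg Prod.fst h'
  have h2 : i0 = j := congrArg Prod.snd h'
  subst h2
  exact ⟨hne0, h1⟩

lemma base_entry {R : Matrix (Fin m) (Fin m) (LaurentSeries F)} {c : Fin m → ℤ}
    (hR : IsBaseMatrix R c) (i j : Fin m) :
    R i j = 0 ∨ (c j ≤ (R i j).order ∧ (i < j → c j < (R i j).order)) := by
  have hle : (↑(toLex (c j, j)) : WithTop (Lex (ℤ × Fin m))) ≤ ivc (R i j) i := by
    rw [← hR j]; exact Iv_le (fun i => R i j) i
  rcases of_le_ivc hle with h0 | ⟨h1, h2⟩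
  · exact Or.inl h0
  · refine Or.inr ⟨h1, fun hij => ?_⟩
    rcases lt_or_eq_of_le h1 with h' | h'
    · exact h'
    · exact absurd (h2 h'.symm) (not_le.mpr hij)

lemma dmul_eq_zero {c : Fin m → ℤ} {r : Fin m → LaurentSeries F} {j : Fin m} :
    Dmul c r j = 0 ↔ r j = 0 := by
  rw [Dmul]
  constructor
  · intro h
    rcases mul_eq_zero.mp h with h | h
    · exact absurd h (HahnSeries.single_ne_zero one_ne_zero)
    · exact h
  · intro h; rw [h, mul_zero]

lemma dmul_order {c : Fin m → ℤ} {r : Fin m → LaurentSeries F} {j : Fin m} (h : r j ≠ 0) :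
    (Dmul c r j).order = c j + (r j).order := by
  rw [Dmul, HahnSeries.order_mul (HahnSeries.single_ne_zero one_ne_zero) h,
    HahnSeries.order_single one_ne_zero]

end Stmt16Aux

open Stmt16Aux in
theorem stmt16 (F : Type*) [Field F] (m : ℕ)
    (R : Matrix (Fin m) (Fin m) (LaurentSeries F)) (c : Fin m → ℤ)
    (hR : IsBaseMatrix R c) :
    IsUnit R ∧ ∀ r : Fin m → LaurentSeries F, Iv (R.mulVec r) = Iv (Dmul c r) := by
  classical
  have main : ∀ r : Fin m → LaurentSeries F, Iv (R.mulVec r) = Iv (Dmul c r) := by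
    intro r
    have hmv : R.mulVec r = fun i => ∑ j, R i j * r j := by
      funext i; simp [Matrix.mulVec, dotProduct]
    by_cases htop : Iv (Dmul c r) = ⊤
    · rw [htop, Iv_eq_top_iff]
      intro i
      rw [hmv]
      exact Finset.sum_eq_zero fun j _ => by
        rw [dmul_eq_zero.mp (Iv_eq_top_iff.mp htop j), mul_zero]
    · have hmne : (Finset.univ : Finset (Fin m)).Nonempty := by
        by_contra h
        rw [Finset.not_nonempty_iff_eq_empty] at h
        rw [Iv, h, Finset.inf_empty] at htop
        exact htop rfl
      obtain ⟨h0, -, hh0⟩ := Finset.exists_mem_eq_inf Finset.univ hmne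
        (fun i => ivc (Dmul c r i) i)
      have hrh0 : r h0 ≠ 0 := by
        intro hz
        rw [Iv, hh0, ivc, if_pos (dmul_eq_zero.mpr hz)] at htop
        exact htop rfl
      set w : ℤ := c h0 + (r h0).order with hw
      have hIvD : Iv (Dmul c r) = ↑(toLex (w, h0)) := by
        rw [Iv, hh0, ivc_eq (fun h => hrh0 (dmul_eq_zero.mp h)) (dmul_order hrh0)]
      have hbound : ∀ j, r j = 0 ∨
          (w ≤ c j + (r j).order ∧ (j < h0 → w < c j + (r j).order)) := by
        intro j
        have hle : (↑(toLex (w, h0)) : WithTop (Lex (ℤ × Fin m))) ≤ ivc (Dmul c r j) j := by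
          rw [← hIvD]; exact Iv_le _ j
        rcases of_le_ivc hle with h | ⟨h1, h2⟩
        · exact Or.inl (dmul_eq_zero.mp h)
        · by_cases hz : r j = 0
          · exact Or.inl hz
          · rw [dmul_order hz] at h1 h2
            refine Or.inr ⟨h1, fun hj => ?_⟩
            rcases lt_or_eq_of_le h1 with h' | h'
            · exact h'
            · exact absurd (h2 h'.symm) (not_le.mpr hj)
      have hterm : ∀ i j, R i j * r j = 0 ∨
          (w ≤ (R i j * r j).order ∧ ((i < j ∨ j < h0) → w < (R i j * r j).order)) := by
        intro i j
        by_cases hRz : R i j = 0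
        · exact Or.inl (by rw [hRz, zero_mul])
        by_cases hrz : r j = 0
        · exact Or.inl (by rw [hrz, mul_zero])
        rcases base_entry hR i j with h | ⟨hb1, hb2⟩
        · exact absurd h hRz
        rcases hbound j with h | ⟨hr1, hr2⟩
        · exact absurd h hrz
        have ho : (R i j * r j).order = (R i j).order + (r j).order :=
          HahnSeries.order_mul hRz hrz
        refine Or.inr ⟨?_, ?_⟩
        · rw [ho]
          exact hr1.trans (add_le_add_left hb1 _)
        · intro hcase
          rw [ho]
          rcases hcase with hij | hjh
          · exact hr1.trans_lt (add_lt_add_left (hb2 hij) _)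
          · exact (hr2 hjh).trans_le (add_le_add_left hb1 _)
      have hdiag := base_diag hR h0
      have hsum0 : (∑ j, R h0 j * r j) ≠ 0 ∧ (∑ j, R h0 j * r j).order = w := by
        refine sum_order_eq (Finset.mem_univ h0) (mul_ne_zero hdiag.1 hrh0) ?_ ?_
        · rw [HahnSeries.order_mul hdiag.1 hrh0, hdiag.2]
        · intro j _ hjne
          rcases hterm h0 j with h | ⟨-, h2⟩
          · exact Or.inl h
          · refine Or.inr (h2 ?_)
            rcases lt_or_gt_of_ne hjne with h' | h'
            · exact Or.inr h'
            · exact Or.inl h'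
      rw [hIvD, hmv]
      refine Iv_eq h0 (ivc_eq hsum0.1 hsum0.2) ?_
      intro i
      rcases le_or_gt h0 i with hi | hi
      · refine le_ivc_of ?_
        rcases sum_order Finset.univ (fun j => R i j * r j) w
            (fun j _ => (hterm i j).imp id And.left) with h | h
        · exact Or.inl h
        · exact Or.inr (Or.inr ⟨h, hi⟩)
      · refine le_ivc_of ?_
        rcases sum_order Finset.univ (fun j => R i j * r j) (w + 1)
            (fun j _ => by
              rcases hterm i j with h | ⟨-, h2⟩
              · exact Or.inl h
              · refine Or.inr (Int.add_one_le_iff.mpr (h2 ?_))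
                rcases le_or_gt h0 j with h' | h'
                · exact Or.inl (hi.trans_le h')
                · exact Or.inr h') with h | h
        · exact Or.inl h
        · exact Or.inr (Or.inl (Int.lt_iff_add_one_le.mpr h))
  refine ⟨?_, main⟩
  have hdet : R.det ≠ 0 := by
    intro hdet
    obtain ⟨v, hv, hv0⟩ := Matrix.exists_mulVec_eq_zero_iff.mpr hdet
    apply hv
    have h1 : Iv (Dmul c v) = ⊤ := by
      rw [← main v, hv0, Iv_eq_top_iff]
      intro i; rfl
    funext j
    exact dmul_eq_zero.mp (Iv_eq_top_iff.mp h1 j)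
  exact (Matrix.isUnit_iff_isUnit_det R).mpr (isUnit_iff_ne_zero.mpr hdet)

end
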